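/- arXiv:1401.3555 — 3 statements merged into one kernel-verified Lean document; each statement's English description precedes it below -/
import Mathlib

section
/- Let p > 3, n = 2m ≥ 4, and let x = Σ_{i=1}^{2m} σ(i) x_i^2 ∂_{i'} (a degree-1 element of the Hamiltonian algebra). If y = Σ_{i,j} b_{ij} x_i ∂_j is a degree-0 element of W(2m) satisfying the Hamiltonian condition b_{ii} = −b_{i'i'} for all i (coming from σ(i)∂_j(f_i) = σ(j')∂_{i'}(f_{j'})), and [x, y] = 0, then y = 0. -/
set_option synthInstance.maxHeartbeats 1000000
set_option maxHeartbeats 1000000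

open MvPolynomial

/-- The truncated polynomial algebra `A(n) = k[X_1,...,X_n]/(X_1^p,...,X_n^p)`. -/
abbrev TruncPoly (k : Type*) [CommRing k] (n p : ℕ) : Type _ :=
  MvPolynomial (Fin n) k ⧸
    Ideal.span (Set.range fun i : Fin n => (X i : MvPolynomial (Fin n) k) ^ p)

/-- The image `x i` of `X i` in the truncated polynomial algebra. -/
noncomputable def tx {k : Type*} [CommRing k] {n p : ℕ} (i : Fin n) : TruncPoly k n p :=
  Ideal.Quotient.mk _ (X i)

/-- The monomial `x^α` in the truncated polynomial algebra. -/
noncomputable def txm {k : Type*} [CommRing k] {n p : ℕ} (α : Fin n → ℕ) : TruncPoly k n p :=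
  ∏ i, tx i ^ α i

/-- `ε i`, the multi-index with `1` in position `i` and `0` elsewhere. -/
def eps {n : ℕ} (i : Fin n) : Fin n → ℕ := fun s => if s = i then 1 else 0

/-- The sign `σ(i)`: `+1` for `i` in the first half, `-1` in the second half. -/
def hsg {m : ℕ} (i : Fin (2 * m)) : ℤ := if (i : ℕ) < m then 1 else -1

/-- The Hamiltonian map `D_H(f) = Σ_i σ(i) ∂_i(f) ∂_{i'}`, where `i' = 2m+1-i`
(realised as `Fin.rev i` in 0-indexed notation). -/
noncomputable def DH {k : Type*} [Field k] {m p : ℕ}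
    (Dp : Fin (2 * m) → Derivation k (TruncPoly k (2 * m) p) (TruncPoly k (2 * m) p))
    (f : TruncPoly k (2 * m) p) :
    Derivation k (TruncPoly k (2 * m) p) (TruncPoly k (2 * m) p) :=
  ∑ i : Fin (2 * m), hsg i • ((Dp i f : TruncPoly k (2 * m) p) • Dp (Fin.rev i))

/-- The Poisson bracket `{f,g} = Σ_i σ(i) ∂_i(f) ∂_{i'}(g)` on `A(2m)`. -/
noncomputable def poisson {k : Type*} [Field k] {m p : ℕ}
    (Dp : Fin (2 * m) → Derivation k (TruncPoly k (2 * m) p) (TruncPoly k (2 * m) p))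
    (f g : TruncPoly k (2 * m) p) : TruncPoly k (2 * m) p :=
  ∑ i : Fin (2 * m), hsg i • (Dp i f * Dp (Fin.rev i) g)

lemma coeff_zero_of_mem {k : Type*} [CommRing k] {n p : ℕ}
    {f : MvPolynomial (Fin n) k}
    (hf : f ∈ Ideal.span (Set.range fun i : Fin n => (X i : MvPolynomial (Fin n) k) ^ p))
    (α : (Fin n) →₀ ℕ) (hα : ∀ i, α i < p) : coeff α f = 0 := by
  induction hf using Submodule.span_induction generalizing α with
  | mem x hx =>
      obtain ⟨i, rfl⟩ := hx
      simp only []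
      rw [X_pow_eq_monomial, coeff_monomial, if_neg]
      intro h
      have := hα i
      rw [← h, Finsupp.single_eq_same] at this
      omega
  | zero => simp
  | add x y _ _ hx hy => simp [hx α hα, hy α hα]
  | smul c x _ hx =>
      rw [smul_eq_mul, coeff_mul]
      apply Finset.sum_eq_zero
      intro z hz
      rw [Finset.HasAntidiagonal.mem_antidiagonal] at hz
      rw [hx z.2 (fun i => lt_of_le_of_lt ?_ (hα i)), mul_zero]
      rw [← hz]; simp

lemma dsum_apply {k A : Type*} [CommRing k] [CommRing A] [Algebra k A] {ι} (s : Finset ι)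
    (D : ι → Derivation k A A) (a : A) : (∑ i ∈ s, D i) a = ∑ i ∈ s, D i a := by
  induction s using Finset.cons_induction with
  | empty => rfl
  | cons i s hi ih => rw [Finset.sum_cons, Finset.sum_cons, Derivation.add_apply, ih]

/-- for `p > 3` and `n = 2m ≥ 4`, with `x = Σ_i σ(i) x_i^2 ∂_{i'}`,
if `y = Σ_{i,j} b_{ij} x_i ∂_j` satisfies the Hamiltonian condition `b_{ii} = −b_{i'i'}`
and `[x, y] = 0`, then `y = 0`. -/
theorem ad_injective_H {k : Type*} [Field k] (p m : ℕ) (hp : p.Prime) (hp3 : 3 < p)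
    [CharP k p] (hm : 2 ≤ m)
    (Dp : Fin (2 * m) → Derivation k (TruncPoly k (2 * m) p) (TruncPoly k (2 * m) p))
    (hDp : ∀ i j, Dp i (tx j) = if i = j then 1 else 0)
    (b : Fin (2 * m) → Fin (2 * m) → k)
    (hb : ∀ i, b i i = - b (Fin.rev i) (Fin.rev i))
    (hcomm :
      ⁅∑ i : Fin (2 * m), hsg i • (((tx i : TruncPoly k (2 * m) p) ^ 2) • Dp (Fin.rev i)),
        ∑ i : Fin (2 * m), ∑ j : Fin (2 * m),
          b i j • ((tx i : TruncPoly k (2 * m) p) • Dp j)⁆ = 0) :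
    ∑ i : Fin (2 * m), ∑ j : Fin (2 * m),
      b i j • ((tx i : TruncPoly k (2 * m) p) • Dp j) = 0 := by
  set T := TruncPoly k (2 * m) p
  set Xd : Derivation k T T :=
    ∑ i : Fin (2 * m), hsg i • (((tx i : T) ^ 2) • Dp (Fin.rev i)) with hXd
  set Yd : Derivation k T T :=
    ∑ i : Fin (2 * m), ∑ j : Fin (2 * m), b i j • ((tx i : T) • Dp j) with hYd
  set csg : Fin (2 * m) → k := fun i => ((hsg i : ℤ) : k) with hcsg
  have hcsgne : ∀ i, csg i ≠ 0 := by
    intro i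
    simp only [hcsg, hsg]
    split <;> simp
  -- Y applied to a generator
  have hY : ∀ l : Fin (2 * m), Yd (tx l) = ∑ i : Fin (2 * m), b i l • (tx i : T) := by
    intro l
    rw [hYd, dsum_apply]
    refine Finset.sum_congr rfl fun i _ => ?_
    rw [dsum_apply, Finset.sum_eq_single l]
    · simp [Derivation.smul_apply, hDp]
    · intro j _ hj
      simp [Derivation.smul_apply, hDp, hj]
    · simp
  -- X applied to a generator
  have hX : ∀ l : Fin (2 * m), Xd (tx l) = hsg (Fin.rev l) • ((tx (Fin.rev l) : T) ^ 2) := by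
    intro l
    rw [hXd, dsum_apply, Finset.sum_eq_single (Fin.rev l)]
    · simp [Derivation.smul_apply, hDp, Fin.rev_rev]
    · intro i _ hi
      have : Fin.rev i ≠ l := fun h => hi (by rw [← h, Fin.rev_rev])
      simp [Derivation.smul_apply, hDp, this]
    · simp
  have key : ∀ l : Fin (2 * m),
      (∑ i : Fin (2 * m), (b i l * csg (Fin.rev i)) • ((tx (Fin.rev i) : T) ^ 2))
        - csg (Fin.rev l) •
            ((2 : T) * tx (Fin.rev l) * ∑ j : Fin (2 * m), b j (Fin.rev l) • (tx j : T)) = 0 := by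
    intro l
    have h0 : Xd (Yd (tx l)) - Yd (Xd (tx l)) = 0 := by
      rw [← Derivation.commutator_apply, hcomm]
      rfl
    rw [hY l, map_sum, hX l, map_zsmul, Derivation.leibniz_pow, hY (Fin.rev l)] at h0
    have e1 : ∀ i : Fin (2 * m), Xd (b i l • (tx i : T))
        = (b i l * csg (Fin.rev i)) • ((tx (Fin.rev i) : T) ^ 2) := by
      intro i
      rw [Derivation.map_smul, hX i, mul_smul, hcsg]
      rw [Int.cast_smul_eq_zsmul]
    rw [Finset.sum_congr rfl fun i _ => e1 i] at h0
    rw [← h0]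
    congr 1
    rw [hcsg, Int.cast_smul_eq_zsmul]
    congr 1
    rw [pow_one, smul_eq_mul, nsmul_eq_mul, Nat.cast_ofNat, mul_assoc]
  -- transfer to the polynomial ring
  have hmkC : ∀ (a : k) (q : MvPolynomial (Fin (2 * m)) k),
      Ideal.Quotient.mk (Ideal.span (Set.range fun i : Fin (2 * m) =>
        (X i : MvPolynomial (Fin (2 * m)) k) ^ p)) (C a * q)
      = a • Ideal.Quotient.mk _ q := by
    intro a q
    rw [map_mul, ← MvPolynomial.algebraMap_eq, ← Ideal.Quotient.algebraMap_eq,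
      ← IsScalarTower.algebraMap_apply, ← Algebra.smul_def]
  set Q : Fin (2 * m) → MvPolynomial (Fin (2 * m)) k := fun l =>
    (∑ i : Fin (2 * m), C (b i l) * (C (csg (Fin.rev i)) * X (Fin.rev i) ^ 2))
      - C (csg (Fin.rev l)) *
          ((2 : MvPolynomial (Fin (2 * m)) k) * X (Fin.rev l) *
            ∑ j : Fin (2 * m), C (b j (Fin.rev l)) * X j) with hQdef
  have hQ : ∀ l, Ideal.Quotient.mk (Ideal.span (Set.range fun i : Fin (2 * m) =>
      (X i : MvPolynomial (Fin (2 * m)) k) ^ p)) (Q l) = 0 := by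
    intro l
    rw [← key l, hQdef]
    simp only [map_sub, map_sum, hmkC, map_mul, map_pow, map_ofNat, mul_smul, tx]
  have hQmem : ∀ l, Q l ∈ Ideal.span (Set.range fun i : Fin (2 * m) =>
      (X i : MvPolynomial (Fin (2 * m)) k) ^ p) :=
    fun l => Ideal.Quotient.eq_zero_iff_mem.mp (hQ l)
  have hcoef : ∀ a l : Fin (2 * m),
      b a l * csg (Fin.rev a)
        - csg (Fin.rev l) * (2 * (if l = a then b (Fin.rev l) (Fin.rev l) else 0)) = 0 := by
    intro a l
    have hsmall : ∀ i : Fin (2 * m), (Finsupp.single (Fin.rev a) 2 : Fin (2 * m) →₀ ℕ) i < p := by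
      intro i
      rw [Finsupp.single_apply]
      split <;> omega
    have h := coeff_zero_of_mem (hQmem l) (Finsupp.single (Fin.rev a) 2) hsmall
    rw [hQdef] at h
    rw [coeff_sub, coeff_sum] at h
    have e1 : ∀ i : Fin (2 * m),
        coeff (Finsupp.single (Fin.rev a) 2)
            (C (b i l) * (C (csg (Fin.rev i)) * X (Fin.rev i) ^ 2))
          = if i = a then b a l * csg (Fin.rev a) else 0 := by
      intro i
      rw [coeff_C_mul, coeff_C_mul, coeff_X_pow]
      by_cases hia : i = a
      · subst hia; simp [mul_comm]
      · rw [if_neg, if_neg hia, mul_zero, mul_zero]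
        intro hcon
        exact hia (Fin.rev_injective ((Finsupp.single_left_inj (by norm_num)).mp hcon))
    rw [Finset.sum_congr rfl fun i _ => e1 i,
      Finset.sum_ite_eq' Finset.univ a, if_pos (Finset.mem_univ a)] at h
    have e2 : coeff (Finsupp.single (Fin.rev a) 2)
        (C (csg (Fin.rev l)) *
          ((2 : MvPolynomial (Fin (2 * m)) k) * X (Fin.rev l) *
            ∑ j : Fin (2 * m), C (b j (Fin.rev l)) * X j))
        = csg (Fin.rev l) * (2 * (if l = a then b (Fin.rev l) (Fin.rev l) else 0)) := by
      rw [coeff_C_mul]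
      congr 1
      rw [mul_assoc, ← map_ofNat (C : k →+* MvPolynomial (Fin (2 * m)) k) 2, coeff_C_mul]
      congr 1
      rw [Finset.mul_sum, coeff_sum]
      have e3 : ∀ j : Fin (2 * m),
          coeff (Finsupp.single (Fin.rev a) 2)
              (X (Fin.rev l) * (C (b j (Fin.rev l)) * X j))
            = if l = a ∧ j = Fin.rev l then b (Fin.rev l) (Fin.rev l) else 0 := by
        intro j
        rw [mul_left_comm, coeff_C_mul, coeff_X_mul', coeff_X']
        by_cases hla : l = a
        · subst hla
          have hmem : Fin.rev l ∈
              (Finsupp.single (Fin.rev l) 2 : Fin (2 * m) →₀ ℕ).support := by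
            simp
          rw [if_pos hmem]
          have hsub : (Finsupp.single (Fin.rev l) 2 : Fin (2 * m) →₀ ℕ)
              - Finsupp.single (Fin.rev l) 1 = Finsupp.single (Fin.rev l) 1 := by
            ext s
            simp only [Finsupp.coe_tsub, Pi.sub_apply, Finsupp.single_apply]
            split <;> rfl
          rw [hsub]
          by_cases hj : j = Fin.rev l
          · subst hj; simp
          · rw [if_neg, if_neg (by tauto), mul_zero]
            exact fun hcon => hj ((Finsupp.single_left_inj one_ne_zero).mp hcon)
        · rw [if_neg, if_neg (by tauto), mul_zero]
          simp only [Finsupp.mem_support_iff, Finsupp.single_apply, ne_eq, not_not]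
          rw [if_neg (fun hcon => hla (Fin.rev_injective hcon).symm)]
      rw [Finset.sum_congr rfl fun j _ => e3 j]
      by_cases hla : l = a
      · subst hla
        simp
      · simp [hla]
    rw [e2] at h
    exact h
  -- conclude all coefficients vanish
  have hb0 : ∀ i j, b i j = 0 := by
    intro i j
    by_cases hij : j = i
    · subst hij
      have hd : ∀ u : Fin (2 * m), b u u = 0 := by
        intro u
        have h := hcoef u u
        rw [if_pos rfl, hb u] at h
        have h3 : (3 : k) ≠ 0 := by
          have hnd : ¬ (p ∣ 3) := fun hdvd => by
            have := Nat.le_of_dvd (by norm_num) hdvd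
            omega
          have := (CharP.cast_eq_zero_iff k p 3).not.mpr hnd
          simpa using this
        have hz : csg (Fin.rev u) *
            (-(b (Fin.rev u) (Fin.rev u)) - 2 * b (Fin.rev u) (Fin.rev u)) = 0 := by
          rw [← h]; ring
        rcases mul_eq_zero.mp hz with h' | h'
        · exact absurd h' (hcsgne _)
        · have h3b : (3 : k) * b (Fin.rev u) (Fin.rev u) = 0 := by linear_combination -h'
          have hbu : b (Fin.rev u) (Fin.rev u) = 0 := by
            rcases mul_eq_zero.mp h3b with h'' | h''
            · exact absurd h'' h3
            · exact h''
          rw [hb u, hbu, neg_zero]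
      exact hd j
    · have h := hcoef i j
      rw [if_neg hij, mul_zero, mul_zero, sub_zero] at h
      rcases mul_eq_zero.mp h with h' | h'
      · exact h'
      · exact absurd h' (hcsgne _)
  rw [hYd]
  simp only [hb0, zero_smul, Finset.sum_const_zero]
end

section
/- Let p > 5 (or p ≥ 5 with n ≥ 2), τ = (p−1,...,p−1), and y = Σ_{i=1}^n a_i x^{τ−ε_i} ∂_1 ∈ W(n) with arbitrary a_i ∈ k. Then (ad y)^2 = 0 and [(ad y)(z_1), (ad y)(z_2)] = 0 for all z_1, z_2 ∈ W(n); consequently exp(ad y) = id + ad y is a Lie algebra automorphism of W(n). -/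
set_option synthInstance.maxHeartbeats 1000000
set_option maxHeartbeats 1000000

open MvPolynomial

section Aux
variable {k : Type*} [Field k] {n p : ℕ}

lemma tx_pow_p (i : Fin n) : (tx i : TruncPoly k n p) ^ p = 0 := by
  have h : (tx i : TruncPoly k n p) ^ p
      = Ideal.Quotient.mk _ ((X i : MvPolynomial (Fin n) k) ^ p) := by
    simp [tx, map_pow]
  rw [h, Ideal.Quotient.eq_zero_iff_mem]
  exact Ideal.subset_span ⟨i, rfl⟩

lemma txm_eq_zero {α : Fin n → ℕ} (h : ∃ t, p ≤ α t) : (txm α : TruncPoly k n p) = 0 := by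
  obtain ⟨t, ht⟩ := h
  have h0 : (tx t : TruncPoly k n p) ^ α t = 0 := by
    rw [← Nat.add_sub_cancel' ht, pow_add, tx_pow_p, zero_mul]
  exact Finset.prod_eq_zero (Finset.mem_univ t) h0

lemma txm_add (α β : Fin n → ℕ) :
    (txm (fun t => α t + β t) : TruncPoly k n p) = txm α * txm β := by
  rw [txm, txm, txm, ← Finset.prod_mul_distrib]
  exact Finset.prod_congr rfl fun i _ => pow_add _ _ _

/-- The ideal generated by monomials of total degree at least `d`. -/
noncomputable def Jdeg (k : Type*) [Field k] (n p d : ℕ) : Ideal (TruncPoly k n p) :=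
  Ideal.span {x | ∃ α : Fin n → ℕ, d ≤ ∑ t, α t ∧ x = txm α}

lemma Jdeg_mono {d e : ℕ} (h : d ≤ e) : Jdeg k n p e ≤ Jdeg k n p d :=
  Ideal.span_mono fun x ⟨α, hα, hx⟩ => ⟨α, le_trans h hα, hx⟩

lemma txm_mem_Jdeg {α : Fin n → ℕ} {d : ℕ} (h : d ≤ ∑ t, α t) :
    (txm α : TruncPoly k n p) ∈ Jdeg k n p d :=
  Ideal.subset_span ⟨α, h, rfl⟩

lemma Jdeg_mul_mem {d e : ℕ} {x y : TruncPoly k n p} (hx : x ∈ Jdeg k n p d)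
    (hy : y ∈ Jdeg k n p e) : x * y ∈ Jdeg k n p (d + e) := by
  have h := Ideal.mul_mem_mul hx hy
  rw [Jdeg, Jdeg, Ideal.span_mul_span'] at h
  refine Ideal.span_le.mpr ?_ h
  rintro _ ⟨u, ⟨α, hα, rfl⟩, v, ⟨β, hβ, rfl⟩, rfl⟩
  show txm α * txm β ∈ Jdeg k n p (d + e)
  rw [← txm_add]
  exact txm_mem_Jdeg (by rw [Finset.sum_add_distrib]; omega)

lemma prod_mem_Jdeg (α : Fin n → ℕ) (F : Finset (Fin n)) :
    (∏ i ∈ F, tx i ^ α i : TruncPoly k n p) ∈ Jdeg k n p (∑ i ∈ F, α i) := by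
  have h : (∏ i ∈ F, tx i ^ α i : TruncPoly k n p)
      = txm (fun t => if t ∈ F then α t else 0) := by
    rw [txm]
    rw [← Finset.prod_subset (Finset.subset_univ F)
      (fun i _ hi => by rw [if_neg hi, pow_zero])]
    exact Finset.prod_congr rfl fun i hi => by rw [if_pos hi]
  rw [h]
  refine txm_mem_Jdeg ?_
  rw [Finset.sum_ite_mem, Finset.univ_inter]

lemma tx_pow_mem_Jdeg (a : Fin n) (e : ℕ) : (tx a ^ e : TruncPoly k n p) ∈ Jdeg k n p e := by
  have := prod_mem_Jdeg (k := k) (p := p) (fun _ => e) {a}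
  simpa using this

lemma deriv_prod_mem (z : Derivation k (TruncPoly k n p) (TruncPoly k n p)) (α : Fin n → ℕ)
    (F : Finset (Fin n)) :
    z (∏ i ∈ F, tx i ^ α i) ∈ Jdeg k n p ((∑ i ∈ F, α i) - 1) := by
  classical
  induction F using Finset.induction_on with
  | empty => simp
  | @insert a F ha ih =>
    rw [Finset.prod_insert ha, Finset.sum_insert ha, Derivation.leibniz]
    refine add_mem ?_ ?_
    · -- tx a ^ α a • z (∏ ...)
      rw [smul_eq_mul]
      refine Jdeg_mono (by omega) (Jdeg_mul_mem (tx_pow_mem_Jdeg a (α a)) ih)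
    · -- (∏ ...) • z (tx a ^ α a)
      rw [smul_eq_mul, Derivation.leibniz_pow]
      have h1 : (tx a ^ (α a - 1) : TruncPoly k n p) * z (tx a) ∈ Jdeg k n p (α a - 1) :=
        Ideal.mul_mem_right _ _ (tx_pow_mem_Jdeg a (α a - 1))
      have h2 : α a • ((tx a ^ (α a - 1) : TruncPoly k n p) • z (tx a)) ∈ Jdeg k n p (α a - 1) := by
        rw [smul_eq_mul]; exact nsmul_mem h1 _
      exact Jdeg_mono (by omega) (Jdeg_mul_mem (prod_mem_Jdeg α F) h2)

lemma deriv_mem (z : Derivation k (TruncPoly k n p) (TruncPoly k n p)) {d : ℕ}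
    {x : TruncPoly k n p} (hx : x ∈ Jdeg k n p d) : z x ∈ Jdeg k n p (d - 1) := by
  induction hx using Submodule.span_induction with
  | mem x h =>
    obtain ⟨α, hα, rfl⟩ := h
    exact Jdeg_mono (by omega) (deriv_prod_mem z α Finset.univ)
  | zero => simp
  | add x y hx hy ihx ihy => rw [map_add]; exact add_mem ihx ihy
  | smul r x hx ihx =>
    rw [smul_eq_mul, Derivation.leibniz, smul_eq_mul, smul_eq_mul]
    refine add_mem (Ideal.mul_mem_left _ _ ihx) ?_
    have hx' : x ∈ Jdeg k n p d := hx
    exact Ideal.mul_mem_right _ _ (Jdeg_mono (by omega) hx')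

lemma mem_Jdeg_top_eq_zero {x : TruncPoly k n p} (hx : x ∈ Jdeg k n p (n * (p - 1) + 1)) :
    x = 0 := by
  rw [← Ideal.mem_bot]
  refine Ideal.span_le.mpr ?_ hx
  rintro _ ⟨α, hα, rfl⟩
  rw [SetLike.mem_coe, Ideal.mem_bot]
  refine txm_eq_zero ?_
  by_contra h
  push_neg at h
  have hb : ∀ t, α t ≤ p - 1 := fun t => by have := h t; omega
  have : ∑ t, α t ≤ ∑ _t : Fin n, (p - 1) := Finset.sum_le_sum fun t _ => hb t
  rw [Finset.sum_const, Finset.card_univ, Fintype.card_fin, smul_eq_mul] at this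
  omega

end Aux

lemma deriv_sum_apply {k : Type*} [Field k] {n p : ℕ} {ι : Type*} (s : Finset ι)
    (f : ι → Derivation k (TruncPoly k n p) (TruncPoly k n p)) (w : TruncPoly k n p) :
    (∑ i ∈ s, f i) w = ∑ i ∈ s, f i w := by
  classical
  induction s using Finset.cons_induction with
  | empty => simp
  | cons a s ha ih => rw [Finset.sum_cons, Finset.sum_cons, Derivation.add_apply, ih]

/-- for `p ≥ 5` (excluding the case `n = 1, p = 5`) and
`y = Σ_i a_i x^{τ−ε_i} ∂_1 ∈ W(n)` with arbitrary `a_i ∈ k` (`τ = (p−1,...,p−1)`),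
we have `(ad y)^2 = 0` and `[(ad y)(z₁), (ad y)(z₂)] = 0` for all `z₁, z₂`;
consequently `exp(ad y) = id + ad y` is a Lie algebra automorphism of `W(n)`. -/
theorem exp_ad_automorphism {k : Type*} [Field k] (p n : ℕ) (hp : p.Prime) (hp5 : 5 ≤ p)
    [CharP k p] (hn : 1 ≤ n) (hex : ¬(n = 1 ∧ p = 5))
    (D : Fin n → Derivation k (TruncPoly k n p) (TruncPoly k n p))
    (hD : ∀ i j : Fin n, D i (tx j) = if i = j then 1 else 0)
    (a : Fin n → k)
    (y : Derivation k (TruncPoly k n p) (TruncPoly k n p))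
    (hy : y = ∑ i : Fin n,
      a i • ((txm (fun s => if s = i then p - 2 else p - 1) : TruncPoly k n p) • D ⟨0, hn⟩)) :
    (∀ z : Derivation k (TruncPoly k n p) (TruncPoly k n p), ⁅y, ⁅y, z⁆⁆ = 0) ∧
    (∀ z₁ z₂ : Derivation k (TruncPoly k n p) (TruncPoly k n p), ⁅⁅y, z₁⁆, ⁅y, z₂⁆⁆ = 0) ∧
    (∃ e : Derivation k (TruncPoly k n p) (TruncPoly k n p) ≃ₗ⁅k⁆
        Derivation k (TruncPoly k n p) (TruncPoly k n p),
      ∀ z, e z = z + ⁅y, z⁆) := by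
  classical
  obtain ⟨N, hNdef⟩ : ∃ N, N = n * (p - 1) := ⟨_, rfl⟩
  have hN6 : 6 ≤ N := by
    rcases Nat.lt_or_ge n 2 with h2 | h2
    · have hn1 : n = 1 := by omega
      have hp5' : p ≠ 5 := fun h5 => hex ⟨hn1, h5⟩
      have hp6 : p ≠ 6 := by intro h6; rw [h6] at hp; norm_num at hp
      rw [hNdef, hn1, one_mul]; omega
    · have h1 : 2 * (p - 1) ≤ n * (p - 1) := Nat.mul_le_mul_right _ h2
      rw [hNdef]; omega
  have hdeg : ∀ i : Fin n, N - 1 ≤ ∑ s, (if s = i then p - 2 else p - 1) := by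
    intro i
    have h1 : ∑ s ∈ Finset.univ.erase i, (if s = i then p - 2 else p - 1)
        + (if i = i then p - 2 else p - 1) = ∑ s, (if s = i then p - 2 else p - 1) :=
      Finset.sum_erase_add _ _ (Finset.mem_univ i)
    have h2 : ∑ s ∈ Finset.univ.erase i, (if s = i then p - 2 else p - 1)
        = (n - 1) * (p - 1) := by
      rw [Finset.sum_congr rfl (fun s hs => if_neg (Finset.ne_of_mem_erase hs)),
        Finset.sum_const, Finset.card_erase_of_mem (Finset.mem_univ i), Finset.card_univ,
        Fintype.card_fin, smul_eq_mul]
    rw [if_pos rfl, h2] at h1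
    obtain ⟨m, rfl⟩ : ∃ m, n = m + 1 := ⟨n - 1, by omega⟩
    rw [Nat.succ_mul] at hNdef
    rw [Nat.add_sub_cancel] at h1
    generalize m * (p - 1) = K at h1 hNdef
    omega
  have hyw : ∀ w : TruncPoly k n p, y w = ∑ i, a i •
      ((txm (fun s => if s = i then p - 2 else p - 1) : TruncPoly k n p) * D ⟨0, hn⟩ w) := by
    intro w
    rw [hy, deriv_sum_apply]
    refine Finset.sum_congr rfl fun i _ => ?_
    rw [Derivation.smul_apply, Derivation.smul_apply, smul_eq_mul]
  have hyJ : ∀ w : TruncPoly k n p, y w ∈ Jdeg k n p (N - 1) := by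
    intro w
    rw [hyw]
    refine Submodule.sum_mem _ fun i _ => ?_
    exact Submodule.smul_of_tower_mem _ (a i)
      (Ideal.mul_mem_right _ _ (txm_mem_Jdeg (hdeg i)))
  have hvanish : ∀ u : TruncPoly k n p, u ∈ Jdeg k n p (N - 3) → y u = 0 := by
    intro u hu
    rw [hyw]
    refine Finset.sum_eq_zero fun i _ => ?_
    have h1 : D ⟨0, hn⟩ u ∈ Jdeg k n p (N - 3 - 1) := deriv_mem _ hu
    have h2 := Jdeg_mul_mem (txm_mem_Jdeg (hdeg i)) h1
    have h3 : (txm (fun s => if s = i then p - 2 else p - 1) : TruncPoly k n p) * D ⟨0, hn⟩ u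
        ∈ Jdeg k n p (n * (p - 1) + 1) := Jdeg_mono (by omega) h2
    rw [mem_Jdeg_top_eq_zero h3, smul_zero]
  have A0 : ∀ w : TruncPoly k n p, y (y w) = 0 :=
    fun w => hvanish _ (Jdeg_mono (by omega) (hyJ w))
  have c1 : ∀ z : Derivation k (TruncPoly k n p) (TruncPoly k n p), ⁅y, ⁅y, z⁆⁆ = 0 := by
    intro z
    ext u
    have A1 : y (y (z u)) = 0 := hvanish _ (Jdeg_mono (by omega) (hyJ (z u)))
    have A2 : y (z (y u)) = 0 := hvanish _ (Jdeg_mono (by omega) (deriv_mem z (hyJ u)))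
    have A3 : y (y u) = 0 := hvanish _ (Jdeg_mono (by omega) (hyJ u))
    simp [Derivation.commutator_apply, map_sub, A1, A2, A3, A0]
  have c2 : ∀ z₁ z₂ : Derivation k (TruncPoly k n p) (TruncPoly k n p),
      ⁅⁅y, z₁⁆, ⁅y, z₂⁆⁆ = 0 := by
    intro z1 z2
    ext u
    have B1 : y (z1 (y (z2 u))) = 0 :=
      hvanish _ (Jdeg_mono (by omega) (deriv_mem z1 (hyJ (z2 u))))
    have B2 : y (z1 (z2 (y u))) = 0 :=
      hvanish _ (Jdeg_mono (by omega) (deriv_mem z1 (deriv_mem z2 (hyJ u))))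
    have B3 : y (y (z2 u)) = 0 := hvanish _ (Jdeg_mono (by omega) (hyJ (z2 u)))
    have B4 : y (z2 (y u)) = 0 :=
      hvanish _ (Jdeg_mono (by omega) (deriv_mem z2 (hyJ u)))
    have B1' : y (z2 (y (z1 u))) = 0 :=
      hvanish _ (Jdeg_mono (by omega) (deriv_mem z2 (hyJ (z1 u))))
    have B2' : y (z2 (z1 (y u))) = 0 :=
      hvanish _ (Jdeg_mono (by omega) (deriv_mem z2 (deriv_mem z1 (hyJ u))))
    have B3' : y (y (z1 u)) = 0 := hvanish _ (Jdeg_mono (by omega) (hyJ (z1 u)))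
    have B4' : y (z1 (y u)) = 0 :=
      hvanish _ (Jdeg_mono (by omega) (deriv_mem z1 (hyJ u)))
    simp [Derivation.commutator_apply, map_sub, B1, B2, B3, B4, B1', B2', B3', B4', A0]
  refine ⟨c1, c2, ?_⟩
  set f : Derivation k (TruncPoly k n p) (TruncPoly k n p) →ₗ[k]
      Derivation k (TruncPoly k n p) (TruncPoly k n p) :=
    LinearMap.id + LieAlgebra.ad k _ y with hf
  set g : Derivation k (TruncPoly k n p) (TruncPoly k n p) →ₗ[k]
      Derivation k (TruncPoly k n p) (TruncPoly k n p) :=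
    LinearMap.id - LieAlgebra.ad k _ y with hg
  have hfg : f ∘ₗ g = LinearMap.id := by
    refine LinearMap.ext fun z => ?_
    simp only [hf, hg, LinearMap.coe_comp, Function.comp_apply, LinearMap.add_apply,
      LinearMap.sub_apply, LinearMap.id_apply, LieAlgebra.ad_apply, lie_sub, c1 z]
    abel
  have hgf : g ∘ₗ f = LinearMap.id := by
    refine LinearMap.ext fun z => ?_
    simp only [hf, hg, LinearMap.coe_comp, Function.comp_apply, LinearMap.add_apply,
      LinearMap.sub_apply, LinearMap.id_apply, LieAlgebra.ad_apply, lie_add, c1 z]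
    abel
  have hmaplie : ∀ z1 z2 : Derivation k (TruncPoly k n p) (TruncPoly k n p),
      f ⁅z1, z2⁆ = ⁅f z1, f z2⁆ := by
    intro z1 z2
    simp only [hf, LinearMap.add_apply, LinearMap.id_apply,
      LieAlgebra.ad_apply, add_lie, lie_add, c2 z1 z2, LieRing.leibniz_lie y z1 z2]
    have e1 : ⁅z1 + ⁅y, z1⁆, z2 + ⁅y, z2⁆⁆
        = ⁅z1, z2⁆ + ⁅z1, ⁅y, z2⁆⁆ + (⁅⁅y, z1⁆, z2⁆ + ⁅⁅y, z1⁆, ⁅y, z2⁆⁆) := by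
      ext u
      simp only [Derivation.commutator_apply, Derivation.add_apply, map_add]
      abel
    rw [e1, c2 z1 z2]
    abel
  refine ⟨⟨⟨f, fun {z1 z2} => hmaplie z1 z2⟩, g,
    fun z => by simpa using LinearMap.congr_fun hgf z,
    fun z => by simpa using LinearMap.congr_fun hfg z⟩, fun z => ?_⟩
  show f z = z + ⁅y, z⁆
  simp [hf, LieAlgebra.ad_apply]
end

section
/- Let p > 3, n = 2m+1, and D_K: A(n) → W(n) be defined by D_K(f) = Σ_{i=1}^{2m} (x_i ∂_n(f) + σ(i')∂_{i'}(f)) ∂_i + (2f − Σ_{j=1}^{2m} x_j ∂_j(f)) ∂_n. Then [D_K(f), D_K(g)] = D_K(⟨f,g⟩) for all f, g ∈ A(n), where ⟨f,g⟩ = Δ(f)∂_n(g) − Δ(g)∂_n(f) + Σ_{j=1}^{2m} σ(j)∂_j(f)∂_{j'}(g) and Δ(f) = 2f − Σ_{j=1}^{2m} x_j∂_j(f). -/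
set_option synthInstance.maxHeartbeats 1000000
set_option maxHeartbeats 1000000

open MvPolynomial

/-- `Δ(f) = 2f − Σ_{j=1}^{2m} x_j ∂_j(f)` on `A(2m+1)`. -/
noncomputable def cDelta {k : Type*} [Field k] {m p : ℕ}
    (Dp : Fin (2 * m + 1) → Derivation k (TruncPoly k (2 * m + 1) p) (TruncPoly k (2 * m + 1) p))
    (f : TruncPoly k (2 * m + 1) p) : TruncPoly k (2 * m + 1) p :=
  2 * f - ∑ j : Fin (2 * m), tx j.castSucc * Dp j.castSucc f

/-- The contact bracket
`⟨f,g⟩ = Δ(f)∂_n(g) − Δ(g)∂_n(f) + Σ_{j=1}^{2m} σ(j) ∂_j(f) ∂_{j'}(g)` on `A(2m+1)`,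
where `n = 2m+1` and `j' = 2m+1−j` (realised as `Fin.rev` on the first `2m` indices). -/
noncomputable def cbracket {k : Type*} [Field k] {m p : ℕ}
    (Dp : Fin (2 * m + 1) → Derivation k (TruncPoly k (2 * m + 1) p) (TruncPoly k (2 * m + 1) p))
    (f g : TruncPoly k (2 * m + 1) p) : TruncPoly k (2 * m + 1) p :=
  cDelta Dp f * Dp (Fin.last (2 * m)) g - cDelta Dp g * Dp (Fin.last (2 * m)) f +
    ∑ j : Fin (2 * m), hsg j • (Dp j.castSucc f * Dp (Fin.rev j).castSucc g)

/-- The contact map `D_K(f) = Σ_{i=1}^{2m} (x_i ∂_n(f) + σ(i') ∂_{i'}(f)) ∂_i + Δ(f) ∂_n`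
on `A(2m+1)`, where `n = 2m+1`. -/
noncomputable def DK {k : Type*} [Field k] {m p : ℕ}
    (Dp : Fin (2 * m + 1) → Derivation k (TruncPoly k (2 * m + 1) p) (TruncPoly k (2 * m + 1) p))
    (f : TruncPoly k (2 * m + 1) p) :
    Derivation k (TruncPoly k (2 * m + 1) p) (TruncPoly k (2 * m + 1) p) :=
  (∑ i : Fin (2 * m),
      ((tx i.castSucc * Dp (Fin.last (2 * m)) f + hsg (Fin.rev i) • Dp (Fin.rev i).castSucc f :
        TruncPoly k (2 * m + 1) p) • Dp i.castSucc)) +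
    (cDelta Dp f : TruncPoly k (2 * m + 1) p) • Dp (Fin.last (2 * m))

-- basic generalities
lemma adjoin_tx_top {k : Type*} [CommRing k] {n p : ℕ} :
    Algebra.adjoin k (Set.range (tx : Fin n → TruncPoly k n p)) = ⊤ := by
  have h1 : Set.range (tx : Fin n → TruncPoly k n p)
      = (Ideal.Quotient.mkₐ k _) '' Set.range (X : Fin n → MvPolynomial (Fin n) k) := by
    rw [← Set.range_comp]; rfl
  rw [h1, ← AlgHom.map_adjoin, MvPolynomial.adjoin_range_X, Algebra.map_top]
  exact (AlgHom.range_eq_top _).mpr (Ideal.Quotient.mkₐ_surjective k _)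

lemma derivation_tx_ext {k : Type*} [CommRing k] {n p : ℕ}
    {D1 D2 : Derivation k (TruncPoly k n p) (TruncPoly k n p)}
    (h : ∀ i, D1 (tx i) = D2 (tx i)) : D1 = D2 :=
  Derivation.ext_of_adjoin_eq_top _ adjoin_tx_top (by rintro _ ⟨i, rfl⟩; exact h i)

lemma derivation_sum_apply {k A : Type*} [CommRing k] [CommRing A] [Algebra k A]
    {ι : Type*} (s : Finset ι) (D : ι → Derivation k A A) (a : A) :
    (∑ i ∈ s, D i) a = ∑ i ∈ s, D i a := by
  classical
  induction s using Finset.induction with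
  | empty => simp
  | insert _ _ h ih => simp [Finset.sum_insert h, Derivation.add_apply, ih]

lemma derivation_map_sum {k A : Type*} [CommRing k] [CommRing A] [Algebra k A]
    {ι : Type*} (D : Derivation k A A) (s : Finset ι) (F : ι → A) :
    D (∑ i ∈ s, F i) = ∑ i ∈ s, D (F i) := by
  classical
  induction s using Finset.induction with
  | empty => simp
  | insert _ _ h ih => rw [Finset.sum_insert h, Finset.sum_insert h, Derivation.map_add, ih]

lemma derivation_intCast_mul {k A : Type*} [CommRing k] [CommRing A] [Algebra k A]
    (D : Derivation k A A) (c : ℤ) (u : A) : D ((c : A) * u) = (c : A) * D u := by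
  rw [Derivation.leibniz, Derivation.map_intCast, smul_eq_mul, smul_eq_mul, mul_zero, add_zero]

lemma derivation_two_mul {k A : Type*} [CommRing k] [CommRing A] [Algebra k A]
    (D : Derivation k A A) (u : A) : D (2 * u) = 2 * D u := by
  rw [two_mul, Derivation.map_add, two_mul]

lemma hsg_rev {m : ℕ} (i : Fin (2 * m)) : hsg (Fin.rev i) = -hsg i := by
  have h := i.isLt
  simp only [hsg, Fin.val_rev]
  split_ifs with h1 h2 h2 <;> omega

lemma rev_ne_self {m : ℕ} (i : Fin (2 * m)) : Fin.rev i ≠ i := by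
  have h := i.isLt
  intro h2
  have := congrArg Fin.val h2
  rw [Fin.val_rev] at this; omega

section ContactAux

variable {k : Type*} [Field k] {m p : ℕ}
  (Dp : Fin (2 * m + 1) → Derivation k (TruncPoly k (2 * m + 1) p) (TruncPoly k (2 * m + 1) p))

local notation "A'" => TruncPoly k (2 * m + 1) p

/-- The Euler-type derivation `Σ x_i ∂_i` (over the first 2m coordinates). -/
noncomputable def SXd : Derivation k A' A' :=
  ∑ i : Fin (2 * m), (tx i.castSucc : A') • Dp i.castSucc

noncomputable def SS (f g : A') : A' :=
  ∑ l : Fin (2 * m), hsg l • (Dp l.castSucc f * Dp (Fin.rev l).castSucc g)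

noncomputable def SS' (f g : A') : A' :=
  ∑ l : Fin (2 * m), hsg l • (Dp l.castSucc f * SXd Dp (Dp (Fin.rev l).castSucc g))

noncomputable def SB (h : A') : A' :=
  ∑ i : Fin (2 * m), tx i.castSucc * SXd Dp (Dp i.castSucc h)

lemma SXd_apply (h : A') :
    SXd Dp h = ∑ i : Fin (2 * m), tx i.castSucc * Dp i.castSucc h := by
  rw [SXd, derivation_sum_apply]
  exact Finset.sum_congr rfl fun i _ => by rw [Derivation.smul_apply, smul_eq_mul]

lemma cDelta_eq (h : A') : cDelta Dp h = 2 * h - SXd Dp h := by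
  rw [cDelta, SXd_apply]

variable (hDp : ∀ i j, Dp i (tx j) = if i = j then 1 else 0)
include hDp

lemma Dp_comm (a b : Fin (2 * m + 1)) (h : A') : Dp a (Dp b h) = Dp b (Dp a h) := by
  have key : ⁅Dp a, Dp b⁆ = (0 : Derivation k A' A') := by
    apply derivation_tx_ext
    intro j
    rw [Derivation.commutator_apply, Derivation.zero_apply, hDp, hDp]
    split_ifs <;> simp
  have := Derivation.congr_fun key h
  rw [Derivation.commutator_apply, Derivation.zero_apply, sub_eq_zero] at this
  exact this

end ContactAux

section ContactAux2
variable {k : Type*} [Field k] {m p : ℕ}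
  (Dp : Fin (2 * m + 1) → Derivation k (TruncPoly k (2 * m + 1) p) (TruncPoly k (2 * m + 1) p))
local notation "A'" => TruncPoly k (2 * m + 1) p

lemma SS_antisymm (f g : A') : SS Dp g f = - SS Dp f g := by
  rw [SS, SS, ← Finset.sum_neg_distrib]
  refine Fintype.sum_equiv Fin.revPerm _ _ (fun l => ?_)
  show hsg l • (Dp l.castSucc g * Dp (Fin.rev l).castSucc f)
      = -(hsg (Fin.rev l) • (Dp (Fin.rev l).castSucc f * Dp (Fin.rev (Fin.rev l)).castSucc g))
  rw [Fin.rev_rev, hsg_rev, neg_smul, neg_neg, zsmul_eq_mul, zsmul_eq_mul]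
  ring

variable (hDp : ∀ i j, Dp i (tx j) = if i = j then 1 else 0)
include hDp

lemma N_SX (h : A') :
    Dp (Fin.last (2 * m)) (SXd Dp h) = SXd Dp (Dp (Fin.last (2 * m)) h) := by
  rw [SXd_apply, derivation_map_sum, SXd_apply]
  refine Finset.sum_congr rfl fun i _ => ?_
  rw [Derivation.leibniz, hDp, if_neg (Fin.castSucc_lt_last i).ne', smul_zero, add_zero,
    smul_eq_mul, Dp_comm Dp hDp (Fin.last (2 * m)) i.castSucc]

lemma P_SX (j : Fin (2 * m)) (h : A') :
    Dp j.castSucc (SXd Dp h) = Dp j.castSucc h + SXd Dp (Dp j.castSucc h) := by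
  rw [SXd_apply, derivation_map_sum]
  have step : ∀ i : Fin (2 * m),
      Dp j.castSucc (tx i.castSucc * Dp i.castSucc h)
        = (if j = i then Dp i.castSucc h else 0)
            + tx i.castSucc * Dp i.castSucc (Dp j.castSucc h) := by
    intro i
    simp only [Derivation.leibniz, hDp, Fin.castSucc_inj, smul_eq_mul]
    rw [Dp_comm Dp hDp j.castSucc i.castSucc h]
    split_ifs <;> ring
  simp only [step]
  rw [Finset.sum_add_distrib, Finset.sum_ite_eq, if_pos (Finset.mem_univ j), ← SXd_apply]

lemma SX_SX (h : A') : SXd Dp (SXd Dp h) = SXd Dp h + SB Dp h := by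
  rw [SXd_apply Dp (SXd Dp h)]
  simp only [P_SX Dp hDp, mul_add]
  rw [Finset.sum_add_distrib, ← SXd_apply, SB]

lemma D_SS (a : Fin (2 * m + 1)) (f g : A') :
    Dp a (SS Dp f g) = SS Dp (Dp a f) g + SS Dp f (Dp a g) := by
  rw [SS, derivation_map_sum, SS, SS, ← Finset.sum_add_distrib]
  refine Finset.sum_congr rfl fun l _ => ?_
  rw [zsmul_eq_mul, derivation_intCast_mul, Derivation.leibniz, smul_eq_mul, smul_eq_mul,
    Dp_comm Dp hDp a l.castSucc f, Dp_comm Dp hDp a (Fin.rev l).castSucc g,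
    zsmul_eq_mul, zsmul_eq_mul]
  ring

lemma SS_SX_right (f g : A') : SS Dp f (SXd Dp g) = SS Dp f g + SS' Dp f g := by
  rw [SS, SS, SS', ← Finset.sum_add_distrib]
  refine Finset.sum_congr rfl fun l _ => ?_
  rw [P_SX Dp hDp, mul_add, smul_add]

lemma sum_sxleft (f g : A') :
    ∑ l : Fin (2 * m), hsg l • (SXd Dp (Dp l.castSucc f) * Dp (Fin.rev l).castSucc g)
      = - SS' Dp g f := by
  rw [SS', ← Finset.sum_neg_distrib]
  refine Fintype.sum_equiv Fin.revPerm _ _ (fun l => ?_)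
  show hsg l • (SXd Dp (Dp l.castSucc f) * Dp (Fin.rev l).castSucc g)
      = -(hsg (Fin.rev l) •
          (Dp (Fin.rev l).castSucc g * SXd Dp (Dp (Fin.rev (Fin.rev l)).castSucc f)))
  rw [Fin.rev_rev, hsg_rev, neg_smul, neg_neg, zsmul_eq_mul, zsmul_eq_mul]
  ring

lemma SS_SX_left (f g : A') : SS Dp (SXd Dp f) g = SS Dp f g - SS' Dp g f := by
  rw [SS]
  have step : ∀ l : Fin (2 * m),
      hsg l • (Dp l.castSucc (SXd Dp f) * Dp (Fin.rev l).castSucc g)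
        = hsg l • (Dp l.castSucc f * Dp (Fin.rev l).castSucc g)
            + hsg l • (SXd Dp (Dp l.castSucc f) * Dp (Fin.rev l).castSucc g) := by
    intro l
    rw [P_SX Dp hDp, add_mul, smul_add]
  simp only [step]
  rw [Finset.sum_add_distrib, sum_sxleft Dp hDp, ← SS, sub_eq_add_neg]

lemma SX_SS (f g : A') : SXd Dp (SS Dp f g) = SS' Dp f g - SS' Dp g f := by
  rw [SS, derivation_map_sum]
  have step : ∀ l : Fin (2 * m),
      SXd Dp (hsg l • (Dp l.castSucc f * Dp (Fin.rev l).castSucc g))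
        = hsg l • (SXd Dp (Dp l.castSucc f) * Dp (Fin.rev l).castSucc g)
            + hsg l • (Dp l.castSucc f * SXd Dp (Dp (Fin.rev l).castSucc g)) := by
    intro l
    rw [zsmul_eq_mul, derivation_intCast_mul, Derivation.leibniz, smul_eq_mul, smul_eq_mul,
      zsmul_eq_mul, zsmul_eq_mul]
    ring
  simp only [step]
  rw [Finset.sum_add_distrib, sum_sxleft Dp hDp, ← SS']
  ring

end ContactAux2


section ContactAux3
variable {k : Type*} [Field k] {m p : ℕ}
  (Dp : Fin (2 * m + 1) → Derivation k (TruncPoly k (2 * m + 1) p) (TruncPoly k (2 * m + 1) p))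
local notation "A'" => TruncPoly k (2 * m + 1) p

lemma cbracket_eq (f g : A') :
    cbracket Dp f g = cDelta Dp f * Dp (Fin.last (2 * m)) g
      - cDelta Dp g * Dp (Fin.last (2 * m)) f + SS Dp f g := rfl

lemma DK_eq (f h : A') :
    DK Dp f h = Dp (Fin.last (2 * m)) f * SXd Dp h + SS Dp f h
      + cDelta Dp f * Dp (Fin.last (2 * m)) h := by
  rw [DK, Derivation.add_apply, derivation_sum_apply, Derivation.smul_apply, smul_eq_mul]
  congr 1
  have split : ∀ i : Fin (2 * m),
      ((tx i.castSucc * Dp (Fin.last (2 * m)) f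
          + hsg (Fin.rev i) • Dp (Fin.rev i).castSucc f : A') • Dp i.castSucc) h
        = Dp (Fin.last (2 * m)) f * (tx i.castSucc * Dp i.castSucc h)
            + hsg (Fin.rev i) • (Dp (Fin.rev i).castSucc f * Dp i.castSucc h) := by
    intro i
    rw [Derivation.smul_apply, smul_eq_mul, add_mul, zsmul_eq_mul, zsmul_eq_mul]
    ring
  simp only [split]
  rw [Finset.sum_add_distrib, SXd_apply, Finset.mul_sum, SS]
  congr 1
  refine Fintype.sum_equiv Fin.revPerm _ _ (fun l => ?_)
  show hsg (Fin.rev l) • (Dp (Fin.rev l).castSucc f * Dp l.castSucc h)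
      = hsg (Fin.rev l) • (Dp (Fin.rev l).castSucc f * Dp (Fin.rev (Fin.rev l)).castSucc h)
  rw [Fin.rev_rev]

variable (hDp : ∀ i j, Dp i (tx j) = if i = j then 1 else 0)
include hDp

lemma SXd_tx (j : Fin (2 * m)) : SXd Dp (tx j.castSucc) = tx j.castSucc := by
  rw [SXd_apply]
  have step : ∀ i : Fin (2 * m),
      tx i.castSucc * Dp i.castSucc (tx j.castSucc)
        = if i = j then tx i.castSucc else 0 := by
    intro i
    rw [hDp]
    simp only [Fin.castSucc_inj]
    split_ifs <;> ring
  simp only [step]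
  rw [Finset.sum_ite_eq', if_pos (Finset.mem_univ j)]

lemma SXd_tx_last : SXd Dp (tx (Fin.last (2 * m))) = 0 := by
  rw [SXd_apply]
  refine Finset.sum_eq_zero fun i _ => ?_
  rw [hDp, if_neg (Fin.castSucc_lt_last i).ne, mul_zero]

lemma SS_tx (f : A') (j : Fin (2 * m)) :
    SS Dp f (tx j.castSucc) = hsg (Fin.rev j) • Dp (Fin.rev j).castSucc f := by
  rw [SS]
  have step : ∀ l : Fin (2 * m),
      hsg l • (Dp l.castSucc f * Dp (Fin.rev l).castSucc (tx j.castSucc))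
        = if l = Fin.rev j then hsg l • Dp l.castSucc f else 0 := by
    intro l
    rw [hDp]
    simp only [Fin.castSucc_inj, Fin.rev_eq_iff]
    split_ifs
    · rw [mul_one]
    · rw [mul_zero, smul_zero]
  simp only [step]
  rw [Finset.sum_ite_eq', if_pos (Finset.mem_univ _)]

lemma SS_tx_last (f : A') : SS Dp f (tx (Fin.last (2 * m))) = 0 := by
  rw [SS]
  refine Finset.sum_eq_zero fun l _ => ?_
  rw [hDp, if_neg (Fin.castSucc_lt_last _).ne, mul_zero, smul_zero]

lemma DK_tx_cast (f : A') (j : Fin (2 * m)) :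
    DK Dp f (tx j.castSucc)
      = tx j.castSucc * Dp (Fin.last (2 * m)) f
          + hsg (Fin.rev j) • Dp (Fin.rev j).castSucc f := by
  rw [DK_eq, SXd_tx Dp hDp, SS_tx Dp hDp, hDp, if_neg (Fin.castSucc_lt_last j).ne',
    mul_zero, add_zero]
  congr 1
  exact mul_comm _ _

lemma DK_tx_last (f : A') : DK Dp f (tx (Fin.last (2 * m))) = cDelta Dp f := by
  rw [DK_eq, SXd_tx_last Dp hDp, SS_tx_last Dp hDp, hDp, if_pos rfl, mul_zero, zero_add,
    mul_one, zero_add]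

end ContactAux3

section ContactAux4
variable {k : Type*} [Field k] {m p : ℕ}
  (Dp : Fin (2 * m + 1) → Derivation k (TruncPoly k (2 * m + 1) p) (TruncPoly k (2 * m + 1) p))
local notation "A'" => TruncPoly k (2 * m + 1) p

lemma derivation_map_two' {k A : Type*} [CommRing k] [CommRing A] [Algebra k A]
    (D : Derivation k A A) : D (2 : A) = 0 := by
  rw [show (2 : A) = ((2 : ℕ) : A) by norm_cast, Derivation.map_natCast]

lemma SS_intCast_right (f : A') (c : ℤ) : SS Dp f ((c : A')) = 0 := by
  rw [SS]
  refine Finset.sum_eq_zero fun l _ => ?_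
  rw [Derivation.map_intCast, mul_zero, smul_zero]

lemma SS_intCast_left (g : A') (c : ℤ) : SS Dp ((c : A')) g = 0 := by
  rw [SS]
  refine Finset.sum_eq_zero fun l _ => ?_
  rw [Derivation.map_intCast, zero_mul, smul_zero]

lemma SS_sub_right (f a b : A') : SS Dp f (a - b) = SS Dp f a - SS Dp f b := by
  rw [SS, SS, SS, ← Finset.sum_sub_distrib]
  refine Finset.sum_congr rfl fun l _ => ?_
  rw [Derivation.map_sub, mul_sub, smul_sub]

lemma SS_two_right (f a : A') : SS Dp f (2 * a) = 2 * SS Dp f a := by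
  rw [SS, SS, Finset.mul_sum]
  refine Finset.sum_congr rfl fun l _ => ?_
  rw [derivation_two_mul, zsmul_eq_mul, zsmul_eq_mul]
  ring

variable (hDp : ∀ i j, Dp i (tx j) = if i = j then 1 else 0)
include hDp

lemma DlastP (i : Fin (2 * m)) (h : A') :
    Dp (Fin.last (2 * m)) (Dp i.castSucc h) = Dp i.castSucc (Dp (Fin.last (2 * m)) h) :=
  Dp_comm Dp hDp _ _ h

lemma N_tx_cast (j : Fin (2 * m)) : Dp (Fin.last (2 * m)) (tx j.castSucc) = 0 := by
  rw [hDp, if_neg (Fin.castSucc_lt_last j).ne']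

lemma P_rev_tx (j : Fin (2 * m)) : Dp (Fin.rev j).castSucc (tx j.castSucc) = 0 := by
  rw [hDp, if_neg]
  simp only [Fin.castSucc_inj]
  exact rev_ne_self j

end ContactAux4


/-- `[D_K(f), D_K(g)] = D_K(⟨f,g⟩)` for all `f, g ∈ A(2m+1)`, `p > 3`. -/
theorem DK_bracket {k : Type*} [Field k] (p m : ℕ) (hp : p.Prime) (hp3 : 3 < p) [CharP k p]
    (Dp : Fin (2 * m + 1) → Derivation k (TruncPoly k (2 * m + 1) p) (TruncPoly k (2 * m + 1) p))
    (hDp : ∀ i j, Dp i (tx j) = if i = j then 1 else 0)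
    (f g : TruncPoly k (2 * m + 1) p) :
    ⁅DK Dp f, DK Dp g⁆ = DK Dp (cbracket Dp f g) := by
  apply derivation_tx_ext
  intro j
  rw [Derivation.commutator_apply]
  induction j using Fin.lastCases with
  | last =>
    rw [DK_tx_last Dp hDp, DK_tx_last Dp hDp, DK_tx_last Dp hDp, DK_eq, DK_eq, cbracket_eq]
    simp only [cDelta_eq]
    simp only [Derivation.map_sub, Derivation.map_add, derivation_two_mul, Derivation.leibniz,
      smul_eq_mul, N_SX Dp hDp, P_SX Dp hDp, SX_SX Dp hDp, D_SS Dp hDp, SS_SX_right Dp hDp,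
      SS_SX_left Dp hDp, SX_SS Dp hDp, SS_sub_right Dp, SS_two_right Dp, DlastP Dp hDp,
      derivation_map_two', Derivation.map_intCast, SS_intCast_right Dp, SS_intCast_left Dp,
      mul_zero, zero_mul, add_zero, zero_add, mul_one]
    linear_combination -SS_antisymm Dp f g
  | cast j =>
    simp only [DK_tx_cast Dp hDp, cbracket_eq, cDelta_eq, Derivation.map_add,
      Derivation.map_sub, Derivation.leibniz, smul_eq_mul, zsmul_eq_mul,
      derivation_intCast_mul, derivation_two_mul, DK_eq,
      SXd_tx Dp hDp, SS_tx Dp hDp, SXd_tx_last Dp hDp, SS_tx_last Dp hDp,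
      N_tx_cast Dp hDp, P_rev_tx Dp hDp,
      N_SX Dp hDp, P_SX Dp hDp, SX_SX Dp hDp, D_SS Dp hDp, SS_SX_right Dp hDp,
      SS_SX_left Dp hDp, SX_SS Dp hDp, SS_sub_right Dp, SS_two_right Dp, DlastP Dp hDp,
      derivation_map_two', Derivation.map_intCast, SS_intCast_right Dp, SS_intCast_left Dp,
      mul_zero, zero_mul, add_zero, zero_add, mul_one]
    linear_combination (-(tx j.castSucc)) * SS_antisymm Dp (Dp (Fin.last (2 * m)) f) g
      - ((hsg (Fin.rev j) : ℤ) : TruncPoly k (2 * m + 1) p)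
          * SS_antisymm Dp (Dp (Fin.rev j).castSucc f) g
end
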